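/- For every string ω ∈ {0,1}^n, the stabilization time of ω under the simultaneous "01"→"10" substitution equals Depth(Y(ω)), where Y(ω) is the Young diagram associated to ω. -/

import Mathlib

open Finset

/-- The k-th bit of a string of length `n`, padded with `false` out of range. -/
def bit (n : ℕ) (ω : Fin n → Bool) (k : ℕ) : Bool :=
  if h : k < n then ω ⟨k, h⟩ else false

/-- One step of the evolution: every occurrence of "01" is replaced by "10"
(simultaneously).  `E(ω)_i = 1` iff `(ω_i = 1 ∧ ¬(i ≥ 2 ∧ ω_{i-1} = 0)) ∨
(ω_i = 0 ∧ i < n ∧ ω_{i+1} = 1)` (1-indexed; here 0-indexed). -/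
def evolve (n : ℕ) (ω : Fin n → Bool) : Fin n → Bool :=
  fun i =>
    (bit n ω i.val && !(decide (0 < i.val) && !bit n ω (i.val - 1)))
      || (!bit n ω i.val && bit n ω (i.val + 1))

/-- A string is stable iff it contains no occurrence of "01". -/
def IsStable (n : ℕ) (ω : Fin n → Bool) : Prop :=
  ∀ k : ℕ, ¬(bit n ω k = false ∧ bit n ω (k + 1) = true)

/-- The stabilization time: the least number of applications of `evolve`
after which the string is stable. -/
noncomputable def stabTime (n : ℕ) (ω : Fin n → Bool) : ℕ :=
  sInf {m : ℕ | IsStable n ((evolve n)^[m] ω)}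

/-- A Young diagram: a finite down-closed set of cells in ℕ≥1 × ℕ≥1. -/
def IsYoungDiagram (Y : Finset (ℕ × ℕ)) : Prop :=
  (∀ c ∈ Y, 1 ≤ c.1 ∧ 1 ≤ c.2) ∧
    ∀ c ∈ Y, ∀ i j : ℕ, 1 ≤ i → 1 ≤ j → i ≤ c.1 → j ≤ c.2 → (i, j) ∈ Y

/-- The corner-cutting map: remove all exposed corners, i.e. cells `(i,j)` with
`(i+1,j) ∉ Y` and `(i,j+1) ∉ Y`. -/
def cutCorners (Y : Finset (ℕ × ℕ)) : Finset (ℕ × ℕ) :=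
  Y.filter fun c => (c.1 + 1, c.2) ∈ Y ∨ (c.1, c.2 + 1) ∈ Y

/-- Depth of a Young diagram: `max {i + j - 1 : (i,j) ∈ Y}`, with `depth ∅ = 0`. -/
def depth (Y : Finset (ℕ × ℕ)) : ℕ := Y.sup fun c => c.1 + c.2 - 1

/-- Number of zeros among the first `m` bits of `ω`. -/
def zerosBefore (n : ℕ) (ω : Fin n → Bool) (m : ℕ) : ℕ :=
  (Finset.univ.filter fun l : Fin n => l.val < m ∧ ω l = false).card

/-- Number of ones among the bits of `ω` from position `m` (0-indexed) on. -/
def onesFrom (n : ℕ) (ω : Fin n → Bool) (m : ℕ) : ℕ :=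
  (Finset.univ.filter fun l : Fin n => m ≤ l.val ∧ ω l = true).card

open Classical in
/-- The Young diagram associated to a binary string: the cells below the
monotone lattice path reading ω left to right (0 = right step, 1 = down step).
`(i,j) ∈ Y(ω)` iff there is a cut point `m` with at least `i` zeros among the
first `m` bits and at least `j` ones among the remaining bits. -/
noncomputable def diag (n : ℕ) (ω : Fin n → Bool) : Finset (ℕ × ℕ) :=
  (Finset.Icc 1 n ×ˢ Finset.Icc 1 n).filter fun c =>
    1 ≤ c.1 ∧ 1 ≤ c.2 ∧ ∃ m ≤ n, c.1 ≤ zerosBefore n ω m ∧ c.2 ≤ onesFrom n ω m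

lemma bit_ge (n : ℕ) (ω : Fin n → Bool) (k : ℕ) (h : n ≤ k) : bit n ω k = false := by
  unfold bit; rw [dif_neg (Nat.not_lt.mpr h)]

lemma bit_lt {n : ℕ} {ω : Fin n → Bool} {k : ℕ} (h : bit n ω k = true) : k < n := by
  by_contra hk
  rw [bit_ge n ω k (Nat.not_lt.mp hk)] at h
  exact Bool.false_ne_true h

lemma bit_evolve (n : ℕ) (ω : Fin n → Bool) (k : ℕ) :
    bit n (evolve n ω) k =
      ((bit n ω k && !(decide (0 < k) && !bit n ω (k - 1)))
        || (!bit n ω k && bit n ω (k + 1))) := by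
  by_cases h : k < n
  · show (if h : k < n then evolve n ω ⟨k, h⟩ else false) = _
    rw [dif_pos h]; rfl
  · have hk := Nat.not_lt.mp h
    rw [bit_ge n _ k hk, bit_ge n ω k hk, bit_ge n ω (k+1) (le_trans hk (Nat.le_succ k))]
    simp

lemma zerosBefore_zero (n : ℕ) (ω : Fin n → Bool) : zerosBefore n ω 0 = 0 := by
  unfold zerosBefore
  rw [Finset.card_eq_zero]
  ext l; simp

lemma zerosBefore_succ (n : ℕ) (ω : Fin n → Bool) (m : ℕ) :
    zerosBefore n ω (m + 1)
      = zerosBefore n ω m + (if bit n ω m = false ∧ m < n then 1 else 0) := by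
  unfold zerosBefore
  by_cases hm : m < n
  · by_cases hb : ω ⟨m, hm⟩ = false
    · rw [if_pos ⟨by unfold bit; rw [dif_pos hm]; exact hb, hm⟩]
      have hset : (univ.filter fun l : Fin n => l.val < m + 1 ∧ ω l = false)
          = insert ⟨m, hm⟩ (univ.filter fun l : Fin n => l.val < m ∧ ω l = false) := by
        ext l
        simp only [Finset.mem_filter, Finset.mem_univ, true_and, Finset.mem_insert]
        constructor
        · rintro ⟨hl, hw⟩
          rcases Nat.lt_succ_iff_lt_or_eq.mp hl with h' | h'
          · exact Or.inr ⟨h', hw⟩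
          · exact Or.inl (Fin.ext h')
        · rintro (rfl | ⟨hl, hw⟩)
          · exact ⟨Nat.lt_succ_self m, hb⟩
          · exact ⟨Nat.lt_succ_of_lt hl, hw⟩
      rw [hset, Finset.card_insert_of_notMem (by simp)]
    · rw [if_neg (by unfold bit; rw [dif_pos hm]; tauto)]
      have hset : (univ.filter fun l : Fin n => l.val < m + 1 ∧ ω l = false)
          = (univ.filter fun l : Fin n => l.val < m ∧ ω l = false) := by
        ext l
        simp only [Finset.mem_filter, Finset.mem_univ, true_and]
        constructor
        · rintro ⟨hl, hw⟩
          rcases Nat.lt_succ_iff_lt_or_eq.mp hl with h' | h'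
          · exact ⟨h', hw⟩
          · exact absurd hw (by have hle : l = ⟨m, hm⟩ := Fin.ext h'; rw [hle]; exact hb)
        · rintro ⟨hl, hw⟩; exact ⟨Nat.lt_succ_of_lt hl, hw⟩
      rw [hset]; omega
  · rw [if_neg (by tauto)]
    have hset : (univ.filter fun l : Fin n => l.val < m + 1 ∧ ω l = false)
        = (univ.filter fun l : Fin n => l.val < m ∧ ω l = false) := by
      ext l
      simp only [Finset.mem_filter, Finset.mem_univ, true_and]
      have := l.isLt
      constructor
      · rintro ⟨hl, hw⟩; exact ⟨by omega, hw⟩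
      · rintro ⟨hl, hw⟩; exact ⟨by omega, hw⟩
    rw [hset]; omega

lemma onesFrom_of_ge (n : ℕ) (ω : Fin n → Bool) (m : ℕ) (h : n ≤ m) : onesFrom n ω m = 0 := by
  unfold onesFrom
  rw [Finset.card_eq_zero]
  ext l
  have := l.isLt
  simp only [Finset.mem_filter, Finset.mem_univ, true_and, Finset.notMem_empty, iff_false]
  rintro ⟨h1, _⟩; omega

lemma onesFrom_succ (n : ℕ) (ω : Fin n → Bool) (m : ℕ) :
    onesFrom n ω m = onesFrom n ω (m + 1) + (if bit n ω m = true then 1 else 0) := by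
  by_cases hm : m < n
  · unfold onesFrom
    by_cases hb : ω ⟨m, hm⟩ = true
    · rw [if_pos (by unfold bit; rw [dif_pos hm]; exact hb)]
      have hset : (univ.filter fun l : Fin n => m ≤ l.val ∧ ω l = true)
          = insert ⟨m, hm⟩ (univ.filter fun l : Fin n => m + 1 ≤ l.val ∧ ω l = true) := by
        ext l
        simp only [Finset.mem_filter, Finset.mem_univ, true_and, Finset.mem_insert]
        constructor
        · rintro ⟨hl, hw⟩
          rcases eq_or_lt_of_le hl with h' | h'
          · exact Or.inl (Fin.ext h'.symm)
          · exact Or.inr ⟨h', hw⟩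
        · rintro (rfl | ⟨hl, hw⟩)
          · exact ⟨le_refl m, hb⟩
          · exact ⟨le_of_lt hl, hw⟩
      rw [hset, Finset.card_insert_of_notMem (by simp)]
    · rw [if_neg (by unfold bit; rw [dif_pos hm]; exact hb)]
      have hset : (univ.filter fun l : Fin n => m ≤ l.val ∧ ω l = true)
          = (univ.filter fun l : Fin n => m + 1 ≤ l.val ∧ ω l = true) := by
        ext l
        simp only [Finset.mem_filter, Finset.mem_univ, true_and]
        constructor
        · rintro ⟨hl, hw⟩
          rcases eq_or_lt_of_le hl with h' | h'
          · exact absurd hw (by have hle : l = ⟨m, hm⟩ := Fin.ext h'.symm; rw [hle]; exact hb)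
          · exact ⟨h', hw⟩
        · rintro ⟨hl, hw⟩; exact ⟨le_of_lt hl, hw⟩
      rw [hset]; omega
  · have hm' := Nat.not_lt.mp hm
    rw [onesFrom_of_ge n ω m hm', onesFrom_of_ge n ω (m+1) (by omega),
      bit_ge n ω m hm']
    simp

lemma zerosBefore_le (n : ℕ) (ω : Fin n → Bool) (m : ℕ) : zerosBefore n ω m ≤ n := by
  unfold zerosBefore
  exact le_trans (Finset.card_filter_le _ _) (by simp)

lemma onesFrom_le (n : ℕ) (ω : Fin n → Bool) (m : ℕ) : onesFrom n ω m ≤ n := by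
  unfold onesFrom
  exact le_trans (Finset.card_filter_le _ _) (by simp)

lemma zerosBefore_pos {n : ℕ} {ω : Fin n → Bool} {m : ℕ} (h : 1 ≤ zerosBefore n ω m) :
    ∃ k, k < m ∧ k < n ∧ bit n ω k = false := by
  obtain ⟨l, hl⟩ := Finset.card_pos.mp h
  rw [Finset.mem_filter] at hl
  exact ⟨l.val, hl.2.1, l.isLt, by unfold bit; rw [dif_pos l.isLt]; exact hl.2.2⟩

lemma onesFrom_pos {n : ℕ} {ω : Fin n → Bool} {m : ℕ} (h : 1 ≤ onesFrom n ω m) :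
    ∃ l, m ≤ l ∧ l < n ∧ bit n ω l = true := by
  obtain ⟨l, hl⟩ := Finset.card_pos.mp h
  rw [Finset.mem_filter] at hl
  exact ⟨l.val, hl.2.1, l.isLt, by unfold bit; rw [dif_pos l.isLt]; exact hl.2.2⟩

lemma zerosBefore_pos_of {n : ℕ} {ω : Fin n → Bool} {m k : ℕ}
    (hk : k < m) (hb : bit n ω k = false) (hkn : k < n) : 1 ≤ zerosBefore n ω m := by
  rw [Nat.one_le_iff_ne_zero]
  intro h
  unfold zerosBefore at h
  rw [Finset.card_eq_zero] at h
  have : (⟨k, hkn⟩ : Fin n) ∈ (univ.filter fun l : Fin n => l.val < m ∧ ω l = false) := by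
    rw [Finset.mem_filter]
    refine ⟨Finset.mem_univ _, hk, ?_⟩
    unfold bit at hb; rwa [dif_pos hkn] at hb
  rw [h] at this
  exact absurd this (Finset.notMem_empty _)

lemma onesFrom_pos_of {n : ℕ} {ω : Fin n → Bool} {m l : ℕ}
    (hl : m ≤ l) (hb : bit n ω l = true) : 1 ≤ onesFrom n ω m := by
  have hln := bit_lt hb
  rw [Nat.one_le_iff_ne_zero]
  intro h
  unfold onesFrom at h
  rw [Finset.card_eq_zero] at h
  have : (⟨l, hln⟩ : Fin n) ∈ (univ.filter fun l : Fin n => m ≤ l.val ∧ ω l = true) := by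
    rw [Finset.mem_filter]
    refine ⟨Finset.mem_univ _, hl, ?_⟩
    unfold bit at hb; rwa [dif_pos hln] at hb
  rw [h] at this
  exact absurd this (Finset.notMem_empty _)

/-- Indicator that position `m-1, m` is a swapped "01" occurrence. -/
def sw (n : ℕ) (ω : Fin n → Bool) (m : ℕ) : ℕ :=
  if 1 ≤ m ∧ bit n ω (m - 1) = false ∧ bit n ω m = true then 1 else 0

lemma Zrel (n : ℕ) (ω : Fin n → Bool) :
    ∀ m, zerosBefore n (evolve n ω) m + sw n ω m = zerosBefore n ω m := by
  intro m
  induction m with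
  | zero => simp [zerosBefore_zero, sw]
  | succ m ih =>
    rw [zerosBefore_succ n (evolve n ω) m, bit_evolve, zerosBefore_succ n ω m]
    rcases Nat.eq_zero_or_pos m with rfl | hm1
    · simp only [sw] at ih ⊢
      by_cases hn : 0 < n
      · cases h0 : bit n ω 0 <;> cases h1 : bit n ω 1 <;>
          simp_all <;> omega
      · have h0 : bit n ω 0 = false := bit_ge n ω 0 (by omega)
        have h1 : bit n ω 1 = false := bit_ge n ω 1 (by omega)
        simp_all
    · have h1m : 1 ≤ m := hm1
      have hswm : sw n ω m = if bit n ω (m-1) = false ∧ bit n ω m = true then 1 else 0 := by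
        simp [sw, h1m]
      have hswm1 : sw n ω (m+1) = if bit n ω m = false ∧ bit n ω (m+1) = true then 1 else 0 := by
        simp [sw]
      rw [hswm1]
      rw [hswm] at ih
      have hdm : decide (0 < m) = true := by simp [hm1]
      rw [hdm]
      by_cases hn : m < n
      · cases h0 : bit n ω (m-1) <;> cases h1 : bit n ω m <;> cases h2 : bit n ω (m+1) <;>
          simp_all <;> omega
      · have h1 : bit n ω m = false := bit_ge n ω m (by omega)
        have h2 : bit n ω (m+1) = false := bit_ge n ω (m+1) (by omega)
        cases h0 : bit n ω (m-1) <;> simp_all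

lemma Orel (n : ℕ) (ω : Fin n → Bool) :
    ∀ m, onesFrom n (evolve n ω) m + sw n ω m = onesFrom n ω m := by
  suffices h : ∀ k m, n - m ≤ k → onesFrom n (evolve n ω) m + sw n ω m = onesFrom n ω m by
    intro m; exact h n m (by omega)
  intro k
  induction k with
  | zero =>
    intro m hm
    have hnm : n ≤ m := by omega
    have hb : bit n ω m = false := bit_ge n ω m hnm
    rw [onesFrom_of_ge n _ m hnm, onesFrom_of_ge n _ m hnm]
    simp [sw, hb]
  | succ k ihk =>
    intro m hm
    by_cases hnm : n ≤ m
    · have hb : bit n ω m = false := bit_ge n ω m hnm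
      rw [onesFrom_of_ge n _ m hnm, onesFrom_of_ge n _ m hnm]
      simp [sw, hb]
    · have hn : m < n := by omega
      have ih := ihk (m+1) (by omega)
      rw [onesFrom_succ n (evolve n ω) m, bit_evolve, onesFrom_succ n ω m]
      have hswm1 : sw n ω (m+1) = if bit n ω m = false ∧ bit n ω (m+1) = true then 1 else 0 := by
        simp [sw]
      rw [hswm1] at ih
      rcases Nat.eq_zero_or_pos m with rfl | hm1
      · have hsw0 : sw n ω 0 = 0 := by simp [sw]
        rw [hsw0]
        cases h1 : bit n ω 0 <;> cases h2 : bit n ω 1 <;> simp_all <;> omega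
      · have h1m : 1 ≤ m := hm1
        have hswm : sw n ω m = if bit n ω (m-1) = false ∧ bit n ω m = true then 1 else 0 := by
          simp [sw, h1m]
        rw [hswm]
        have hdm : decide (0 < m) = true := by simp [hm1]
        rw [hdm]
        cases h0 : bit n ω (m-1) <;> cases h1 : bit n ω m <;> cases h2 : bit n ω (m+1) <;>
          simp_all <;> omega

/-- The filtered set of cut points with a zero before and a one after. -/
def Fset (n : ℕ) (ω : Fin n → Bool) : Finset ℕ :=
  (Finset.range (n+1)).filter fun m => 1 ≤ zerosBefore n ω m ∧ 1 ≤ onesFrom n ω m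

def DD (n : ℕ) (ω : Fin n → Bool) : ℕ :=
  (Fset n ω).sup fun m => zerosBefore n ω m + onesFrom n ω m - 1

lemma mem_Fset {n : ℕ} {ω : Fin n → Bool} {m : ℕ} :
    m ∈ Fset n ω ↔ m ≤ n ∧ 1 ≤ zerosBefore n ω m ∧ 1 ≤ onesFrom n ω m := by
  unfold Fset
  rw [Finset.mem_filter, Finset.mem_range]
  constructor
  · rintro ⟨h1, h2⟩; exact ⟨by omega, h2⟩
  · rintro ⟨h1, h2⟩; exact ⟨by omega, h2⟩

lemma depth_diag (n : ℕ) (ω : Fin n → Bool) : depth (diag n ω) = DD n ω := by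
  apply le_antisymm
  · apply Finset.sup_le
    intro c hc
    unfold _root_.diag at hc
    rw [Finset.mem_filter] at hc
    obtain ⟨-, h1, h2, m, hmn, hZ, hO⟩ := hc
    have hmF : m ∈ Fset n ω := mem_Fset.mpr ⟨hmn, by omega, by omega⟩
    have hle : zerosBefore n ω m + onesFrom n ω m - 1 ≤ DD n ω :=
      Finset.le_sup (f := fun m => zerosBefore n ω m + onesFrom n ω m - 1) hmF
    calc c.1 + c.2 - 1 ≤ zerosBefore n ω m + onesFrom n ω m - 1 := by omega
      _ ≤ DD n ω := hle
  · apply Finset.sup_le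
    intro m hm
    rw [mem_Fset] at hm
    obtain ⟨hmn, hZ, hO⟩ := hm
    have hc : (zerosBefore n ω m, onesFrom n ω m) ∈ diag n ω := by
      unfold _root_.diag
      rw [Finset.mem_filter]
      refine ⟨?_, hZ, hO, m, hmn, le_refl _, le_refl _⟩
      rw [Finset.mem_product, Finset.mem_Icc, Finset.mem_Icc]
      exact ⟨⟨hZ, zerosBefore_le n ω m⟩, ⟨hO, onesFrom_le n ω m⟩⟩
    exact Finset.le_sup (f := fun c : ℕ × ℕ => c.1 + c.2 - 1) hc

lemma stable_prop {n : ℕ} {ω : Fin n → Bool} (h : IsStable n ω) :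
    ∀ d k, bit n ω k = false → bit n ω (k + d) = false := by
  intro d
  induction d with
  | zero => intro k hk; exact hk
  | succ d ih =>
    intro k hk
    have h2 := ih k hk
    cases hb : bit n ω (k + d + 1)
    · rfl
    · exact absurd ⟨h2, hb⟩ (h (k + d))

lemma stable_iff_DD (n : ℕ) (ω : Fin n → Bool) : IsStable n ω ↔ DD n ω = 0 := by
  constructor
  · intro h
    rw [DD]
    have hF : Fset n ω = ∅ := by
      rw [Finset.eq_empty_iff_forall_notMem]
      intro m hm
      rw [mem_Fset] at hm
      obtain ⟨hmn, hZ, hO⟩ := hm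
      obtain ⟨k, hkm, hkn, hkb⟩ := zerosBefore_pos hZ
      obtain ⟨l, hlm, hln, hlb⟩ := onesFrom_pos hO
      have hkl : k ≤ l := by omega
      have := stable_prop h (l - k) k hkb
      rw [show k + (l - k) = l by omega] at this
      rw [this] at hlb
      exact Bool.false_ne_true hlb
    rw [hF]
    rfl
  · intro h k ⟨hk0, hk1⟩
    have hk1n := bit_lt hk1
    have hZ : 1 ≤ zerosBefore n ω (k+1) := zerosBefore_pos_of (Nat.lt_succ_self k) hk0 (by omega)
    have hO : 1 ≤ onesFrom n ω (k+1) := onesFrom_pos_of (le_refl (k+1)) hk1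
    have hmF : (k+1) ∈ Fset n ω := mem_Fset.mpr ⟨by omega, hZ, hO⟩
    have h1 : zerosBefore n ω (k+1) + onesFrom n ω (k+1) - 1 ≤ DD n ω :=
      Finset.le_sup (f := fun m => zerosBefore n ω m + onesFrom n ω m - 1) hmF
    omega

lemma sw_cases (n : ℕ) (ω : Fin n → Bool) (m : ℕ) : sw n ω m = 0 ∨ sw n ω m = 1 := by
  unfold sw; split <;> simp

lemma exists_bigger (n : ℕ) (ω : Fin n → Bool) (m : ℕ)
    (hZ : 1 ≤ zerosBefore n ω m) (hO : 1 ≤ onesFrom n ω m) (hsw : sw n ω m = 0) :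
    ∃ m', m' ≤ n ∧ 1 ≤ zerosBefore n ω m' ∧ 1 ≤ onesFrom n ω m' ∧
      zerosBefore n ω m + onesFrom n ω m + 1 ≤ zerosBefore n ω m' + onesFrom n ω m' := by
  obtain ⟨k, hkm, hkn, hkb⟩ := zerosBefore_pos hZ
  obtain ⟨l, hlm, hln, hlb⟩ := onesFrom_pos hO
  have hm1 : 1 ≤ m := by omega
  have hmn : m < n := by omega
  obtain ⟨t, rfl⟩ : ∃ t, m = t + 1 := ⟨m - 1, by omega⟩
  have hnc : ¬(bit n ω t = false ∧ bit n ω (t+1) = true) := by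
    intro hc
    rw [sw, if_pos ⟨hm1, by simpa using hc.1, hc.2⟩] at hsw
    exact one_ne_zero hsw
  cases hbt : bit n ω t
  · -- bit t = false, so bit (t+1) = false; go right
    have hbm : bit n ω (t+1) = false := by
      cases hb : bit n ω (t+1)
      · rfl
      · exact absurd ⟨hbt, hb⟩ hnc
    refine ⟨t + 1 + 1, by omega, ?_, ?_, ?_⟩
    · rw [zerosBefore_succ, if_pos ⟨hbm, hmn⟩]; omega
    · have := onesFrom_succ n ω (t+1)
      rw [hbm] at this
      simp at this
      omega
    · have hZs := zerosBefore_succ n ω (t+1)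
      rw [if_pos ⟨hbm, hmn⟩] at hZs
      have hOs := onesFrom_succ n ω (t+1)
      rw [hbm] at hOs
      simp at hOs
      omega
  · -- bit t = true; go left
    refine ⟨t, by omega, ?_, ?_, ?_⟩
    · have hZs := zerosBefore_succ n ω t
      rw [if_neg (by rw [hbt]; simp)] at hZs
      omega
    · have hOs := onesFrom_succ n ω t
      rw [hbt] at hOs
      simp at hOs
      omega
    · have hZs := zerosBefore_succ n ω t
      rw [if_neg (by rw [hbt]; simp)] at hZs
      have hOs := onesFrom_succ n ω t
      rw [hbt] at hOs
      simp at hOs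
      omega

lemma DD_le (n : ℕ) (ω : Fin n → Bool) {m : ℕ} (hm : m ∈ Fset n ω) :
    zerosBefore n ω m + onesFrom n ω m - 1 ≤ DD n ω :=
  Finset.le_sup (f := fun m => zerosBefore n ω m + onesFrom n ω m - 1) hm

lemma DD_evolve (n : ℕ) (ω : Fin n → Bool) (hd : DD n ω ≠ 0) :
    DD n (evolve n ω) + 1 = DD n ω := by
  -- upper bound
  have hub : ∀ m ∈ Fset n (evolve n ω),
      zerosBefore n (evolve n ω) m + onesFrom n (evolve n ω) m - 1 + 1 ≤ DD n ω := by
    intro m hm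
    rw [mem_Fset] at hm
    obtain ⟨hmn, hZ', hO'⟩ := hm
    have hZr := Zrel n ω m
    have hOr := Orel n ω m
    rcases sw_cases n ω m with hsw | hsw
    · rw [hsw] at hZr hOr
      obtain ⟨m', hm'n, hZ2, hO2, hsum⟩ :=
        exists_bigger n ω m (by omega) (by omega) hsw
      have hle := DD_le n ω (mem_Fset.mpr ⟨hm'n, hZ2, hO2⟩)
      omega
    · have hle := DD_le n ω (mem_Fset.mpr ⟨hmn, by omega, by omega⟩)
      omega
  have hupper : DD n (evolve n ω) + 1 ≤ DD n ω := by
    rcases Nat.eq_zero_or_pos (DD n (evolve n ω)) with h0 | h0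
    · omega
    · have hne : (Fset n (evolve n ω)).Nonempty := by
        by_contra hne
        rw [Finset.not_nonempty_iff_eq_empty] at hne
        rw [DD, hne] at h0
        simp at h0
      obtain ⟨m, hm, hmax⟩ := Finset.exists_mem_eq_sup (Fset n (evolve n ω)) hne
        (fun m => zerosBefore n (evolve n ω) m + onesFrom n (evolve n ω) m - 1)
      have := hub m hm
      rw [DD, hmax]
      omega
  -- lower bound
  have hdpos : 1 ≤ DD n ω := by omega
  have hne : (Fset n ω).Nonempty := by
    by_contra hne
    rw [Finset.not_nonempty_iff_eq_empty] at hne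
    rw [DD, hne] at hd
    simp at hd
  obtain ⟨m, hm, hmax⟩ := Finset.exists_mem_eq_sup (Fset n ω) hne
    (fun m => zerosBefore n ω m + onesFrom n ω m - 1)
  rw [mem_Fset] at hm
  obtain ⟨hmn, hZ, hO⟩ := hm
  have hmax' : DD n ω = zerosBefore n ω m + onesFrom n ω m - 1 := hmax
  have hsw : sw n ω m = 1 := by
    rcases sw_cases n ω m with hsw | hsw
    · obtain ⟨m', hm'n, hZ2, hO2, hsum⟩ := exists_bigger n ω m hZ hO hsw
      have hle := DD_le n ω (mem_Fset.mpr ⟨hm'n, hZ2, hO2⟩)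
      omega
    · exact hsw
  have hc : 1 ≤ m ∧ bit n ω (m - 1) = false ∧ bit n ω m = true := by
    by_contra h
    rw [sw, if_neg h] at hsw
    exact zero_ne_one hsw
  obtain ⟨hm1, hbm1, hbm⟩ := hc
  have hmltn : m < n := bit_lt hbm
  obtain ⟨t, rfl⟩ : ∃ t, m = t + 1 := ⟨m - 1, by omega⟩
  simp only [Nat.add_sub_cancel] at hbm1
  -- relations at t and t+1+... : Z(t+1) = Z t + 1, O t = O (t+1)
  have hZs : zerosBefore n ω (t+1) = zerosBefore n ω t + 1 := by
    rw [zerosBefore_succ, if_pos ⟨hbm1, by omega⟩]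
  have hOs : onesFrom n ω t = onesFrom n ω (t+1) := by
    have := onesFrom_succ n ω t
    rw [hbm1] at this
    simp at this
    omega
  rcases Nat.lt_or_ge 1 (zerosBefore n ω (t+1)) with hZ2 | hZ1
  · -- use t
    have hswt : sw n ω t = 0 := by rw [sw, if_neg (by rw [hbm1]; tauto)]
    have hZrt := Zrel n ω t
    have hOrt := Orel n ω t
    rw [hswt] at hZrt hOrt
    have hmemt : t ∈ Fset n (evolve n ω) := mem_Fset.mpr ⟨by omega, by omega, by omega⟩
    have hle := DD_le n (evolve n ω) hmemt
    omega
  · rcases Nat.lt_or_ge 1 (onesFrom n ω (t+1)) with hO2 | hO1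
    · -- use t+1+1
      have hOs2 : onesFrom n ω (t+1) = onesFrom n ω (t+1+1) + 1 := by
        have := onesFrom_succ n ω (t+1)
        rw [hbm] at this
        simpa using this
      have hZs2 : zerosBefore n ω (t+1+1) = zerosBefore n ω (t+1) := by
        rw [zerosBefore_succ, if_neg (by rw [hbm]; tauto)]
        omega
      have hswt : sw n ω (t+1+1) = 0 := by
        rw [sw, if_neg (by rw [show t+1+1-1 = t+1 from rfl, hbm]; tauto)]
      have hZrt := Zrel n ω (t+1+1)
      have hOrt := Orel n ω (t+1+1)
      rw [hswt] at hZrt hOrt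
      have hn2 : t + 1 + 1 ≤ n := by
        obtain ⟨l, hlm, hln, -⟩ := onesFrom_pos (show 1 ≤ onesFrom n ω (t+1+1) by omega)
        omega
      have hmemt : (t+1+1) ∈ Fset n (evolve n ω) := mem_Fset.mpr ⟨hn2, by omega, by omega⟩
      have hle := DD_le n (evolve n ω) hmemt
      omega
    · -- Z = O = 1, d = 1
      omega

lemma stable_at_DD (n : ℕ) : ∀ d (ω : Fin n → Bool), DD n ω = d →
    IsStable n ((evolve n)^[d] ω) := by
  intro d
  induction d with
  | zero => intro ω h; exact (stable_iff_DD n ω).mpr h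
  | succ d ih =>
    intro ω h
    have hD : DD n (evolve n ω) = d := by
      have := DD_evolve n ω (by omega)
      omega
    have := ih (evolve n ω) hD
    rwa [Function.iterate_succ_apply]

lemma DD_le_of_stable (n : ℕ) : ∀ m (ω : Fin n → Bool),
    IsStable n ((evolve n)^[m] ω) → DD n ω ≤ m := by
  intro m
  induction m with
  | zero => intro ω h; exact le_of_eq ((stable_iff_DD n ω).mp h)
  | succ m ih =>
    intro ω h
    rw [Function.iterate_succ_apply] at h
    have := ih (evolve n ω) h
    rcases Nat.eq_zero_or_pos (DD n ω) with h0 | h0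
    · omega
    · have := DD_evolve n ω (by omega)
      omega


/-- For every string, the stabilization time equals the depth of the
associated Young diagram. -/
theorem stmt6 (n : ℕ) (ω : Fin n → Bool) :
    stabTime n ω = depth (diag n ω) := by
  rw [depth_diag]
  unfold stabTime
  have hmem : DD n ω ∈ {m : ℕ | IsStable n ((evolve n)^[m] ω)} :=
    stable_at_DD n (DD n ω) ω rfl
  apply le_antisymm
  · exact Nat.sInf_le hmem
  · exact DD_le_of_stable n _ ω (Nat.sInf_mem ⟨_, hmem⟩)
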